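/- Let G be a finite-dimensional 2-step solvable Frobenius Lie algebra over a field K of characteristic zero, i.e., [G,G] is abelian and there exists η ∈ G* with ∂η nondegenerate. Then dim G = 2n is even, the derived ideal [G,G] has dimension exactly n, and any complement B of [G,G] with [B,B]=0 satisfies that the adjoint representation of B on [G,G] is faithful and the contragredient action of B on [G,G]* has an open orbit. -/

import Mathlib

/-- a 2-step solvable Frobenius Lie algebra has even dimension 2n,
its derived ideal has dimension n, and any abelian complement B of the derived
ideal acts faithfully on it with an open contragredient orbit. -/
theorem stmt8 {K : Type*} [Field K] [CharZero K]
    (G : Type*) [LieRing G] [LieAlgebra K G] [Module.Finite K G]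
    (h2 : ∀ u v u' v' : G, ⁅⁅u, v⁆, ⁅u', v'⁆⁆ = 0)
    (η : Module.Dual K G)
    (hη : ∀ u : G, (∀ v : G, η ⁅u, v⁆ = 0) → u = 0) :
    Module.finrank K G
      = 2 * Module.finrank K (⁅(⊤ : LieIdeal K G), (⊤ : LieIdeal K G)⁆ : LieIdeal K G) ∧
    ∀ B : Submodule K G,
      IsCompl B (⁅(⊤ : LieIdeal K G), (⊤ : LieIdeal K G)⁆ : LieIdeal K G).toSubmodule →
      (∀ a ∈ B, ∀ b ∈ B, ⁅a, b⁆ = 0) →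
      ((∀ a ∈ B,
          (∀ x ∈ (⁅(⊤ : LieIdeal K G), (⊤ : LieIdeal K G)⁆ : LieIdeal K G), ⁅a, x⁆ = 0)
          → a = 0) ∧
       ∃ α : Module.Dual K (⁅(⊤ : LieIdeal K G), (⊤ : LieIdeal K G)⁆ : LieIdeal K G),
         ∀ f : Module.Dual K (⁅(⊤ : LieIdeal K G), (⊤ : LieIdeal K G)⁆ : LieIdeal K G),
           ∃ a ∈ B, ∀ x : (⁅(⊤ : LieIdeal K G), (⊤ : LieIdeal K G)⁆ : LieIdeal K G),
             f x = -α ⟨⁅a, (x : G)⁆,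
               (⁅(⊤ : LieIdeal K G), (⊤ : LieIdeal K G)⁆ : LieIdeal K G).lie_mem x.2⟩) := by
  classical
  set W : LieIdeal K G := ⁅(⊤ : LieIdeal K G), (⊤ : LieIdeal K G)⁆ with hWdef
  set WS : Submodule K G := W.toSubmodule with hWSdef
  have hmemW : ∀ u v : G, ⁅u, v⁆ ∈ WS := fun u v =>
    LieSubmodule.lie_mem_lie (LieSubmodule.mem_top u) (LieSubmodule.mem_top v)
  have hspan : WS = Submodule.span K { m : G | ∃ x ∈ (⊤ : LieIdeal K G), ∃ n ∈ (⊤ : LieIdeal K G), ⁅x, n⁆ = m } :=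
    LieSubmodule.lieIdeal_oper_eq_linear_span' ..
  -- W is abelian: brackets of elements of W vanish
  have habW : ∀ x ∈ WS, ∀ y ∈ WS, ⁅x, y⁆ = 0 := by
    have layer1 : ∀ u v : G, ∀ x ∈ WS, ⁅x, ⁅u, v⁆⁆ = 0 := by
      intro u v
      have : WS ≤ LinearMap.ker
          ({ toFun := fun x => ⁅x, ⁅u, v⁆⁆,
             map_add' := fun a b => add_lie a b _,
             map_smul' := fun t a => smul_lie t a _ } : G →ₗ[K] G) := by
        rw [hspan, Submodule.span_le]
        rintro m ⟨x, -, n, -, rfl⟩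
        exact h2 x n u v
      exact fun x hx => this hx
    intro x hx
    have : WS ≤ LinearMap.ker
        ({ toFun := fun y => ⁅x, y⁆,
           map_add' := fun a b => lie_add x a b,
           map_smul' := fun t a => lie_smul t x a } : G →ₗ[K] G) := by
      rw [hspan, Submodule.span_le]
      rintro m ⟨u, -, v, -, rfl⟩
      exact layer1 u v x hx
    exact fun y hy => this hy
  -- Step 1 : an element orthogonal to W centralizes W
  have step1 : ∀ u : G, (∀ w ∈ WS, η ⁅u, w⁆ = 0) → ∀ w ∈ WS, ⁅u, w⁆ = 0 := by
    intro u hu w hw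
    apply hη
    intro v
    have hjac : ⁅⁅u, w⁆, v⁆ = ⁅u, ⁅w, v⁆⁆ - ⁅w, ⁅u, v⁆⁆ := lie_lie u w v
    have hwv : ⁅w, v⁆ ∈ WS := by
      have : ⁅w, v⁆ = -⁅v, w⁆ := by rw [← lie_skew]
      rw [this]; exact WS.neg_mem (W.lie_mem hw)
    have h1 : η ⁅u, ⁅w, v⁆⁆ = 0 := hu _ hwv
    have h2' : ⁅w, ⁅u, v⁆⁆ = 0 := habW w hw _ (hmemW u v)
    rw [hjac, map_sub, h1, h2', map_zero, sub_zero]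
  -- Step 2 : two elements orthogonal to W commute
  have step2 : ∀ u u' : G, (∀ w ∈ WS, η ⁅u, w⁆ = 0) → (∀ w ∈ WS, η ⁅u', w⁆ = 0) →
      ⁅u, u'⁆ = 0 := by
    intro u u' hu hu'
    apply hη
    intro v
    have hjac : ⁅⁅u, u'⁆, v⁆ = ⁅u, ⁅u', v⁆⁆ - ⁅u', ⁅u, v⁆⁆ := lie_lie u u' v
    rw [hjac, step1 u hu _ (hmemW u' v), step1 u' hu' _ (hmemW u v), sub_zero, map_zero]
  -- the bilinear form
  set Bf : LinearMap.BilinForm K G :=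
    LinearMap.mk₂ K (fun u v => η ⁅u, v⁆)
      (fun a b c => by show η ⁅a + b, c⁆ = η ⁅a, c⁆ + η ⁅b, c⁆; rw [add_lie, map_add])
      (fun t a b => by show η ⁅t • a, b⁆ = t • η ⁅a, b⁆; rw [smul_lie, map_smul])
      (fun a b c => by show η ⁅a, b + c⁆ = η ⁅a, b⁆ + η ⁅a, c⁆; rw [lie_add, map_add])
      (fun t a b => by show η ⁅a, t • b⁆ = t • η ⁅a, b⁆; rw [lie_smul, map_smul]) with hBf
  have hBfapp : ∀ u v : G, Bf u v = η ⁅u, v⁆ := fun u v => rfl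
  have halt : Bf.IsAlt := fun u => by simp [hBfapp]
  have hrefl : Bf.IsRefl := halt.isRefl
  have hnd : Bf.Nondegenerate :=
    (LinearMap.IsRefl.nondegenerate_iff_separatingLeft hrefl).mpr fun u hu => hη u fun v => hu v
  have hskew : ∀ u v : G, Bf u v = -Bf v u := fun u v => by
    rw [hBfapp, hBfapp, ← lie_skew u v, map_neg]
  -- membership in the orthogonal complement of WS
  have hmem_orth : ∀ u : G, u ∈ Bf.orthogonal WS ↔ ∀ w ∈ WS, η ⁅u, w⁆ = 0 := by
    intro u
    constructor
    · intro h w hw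
      have := h w hw
      have h' : Bf w u = 0 := this
      have := hskew u w
      rw [h'] at this
      simpa [hBfapp] using this
    · intro h w hw
      show Bf w u = 0
      rw [hskew w u, hBfapp, h w hw, neg_zero]
  have hdim_orth : Module.finrank K (Bf.orthogonal WS)
      = Module.finrank K G - Module.finrank K WS :=
    LinearMap.BilinForm.finrank_orthogonal hnd WS
  have hWle : WS ≤ Bf.orthogonal WS := by
    intro w hw
    rw [hmem_orth]
    intro w' hw'
    rw [habW w hw w' hw', map_zero]
  have hOle : Bf.orthogonal WS ≤ Bf.orthogonal (Bf.orthogonal WS) := by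
    intro u' hu'
    intro u hu
    show Bf u u' = 0
    rw [hBfapp, step2 u u' ((hmem_orth u).mp hu) ((hmem_orth u').mp hu'), map_zero]
  have hdim_oorth : Module.finrank K (Bf.orthogonal (Bf.orthogonal WS))
      = Module.finrank K G - Module.finrank K (Bf.orthogonal WS) :=
    LinearMap.BilinForm.finrank_orthogonal hnd _
  have hle1 : Module.finrank K WS ≤ Module.finrank K (Bf.orthogonal WS) :=
    Submodule.finrank_mono hWle
  have hle2 : Module.finrank K (Bf.orthogonal WS)
      ≤ Module.finrank K (Bf.orthogonal (Bf.orthogonal WS)) :=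
    Submodule.finrank_mono hOle
  have hWlefull : Module.finrank K WS ≤ Module.finrank K G := Submodule.finrank_le WS
  have hOlefull : Module.finrank K (Bf.orthogonal WS) ≤ Module.finrank K G :=
    Submodule.finrank_le _
  have hdimW : Module.finrank K G = 2 * Module.finrank K WS := by omega
  have hfr : Module.finrank K W = Module.finrank K WS := rfl
  refine ⟨by rw [hfr]; exact hdimW, ?_⟩
  intro B hcompl habB
  constructor
  · -- faithfulness
    intro a haB hax
    apply hη
    intro v
    obtain ⟨b, w, hb, hw, rfl⟩ := Submodule.codisjoint_iff_exists_add_eq.mp hcompl.codisjoint v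
    rw [lie_add, habB a haB b hb, zero_add, hax w hw, map_zero]
  · -- open orbit
    -- the map Φ : G → Dual (W), u ↦ (x ↦ η ⁅u, x⁆) is surjective
    set Φ : G →ₗ[K] Module.Dual K WS := Bf.compl₂ WS.subtype with hΦ
    have hΦapp : ∀ (u : G) (x : WS), Φ u x = η ⁅u, (x : G)⁆ := fun u x => rfl
    have hker : LinearMap.ker Φ = Bf.orthogonal WS := by
      ext u
      rw [LinearMap.mem_ker, hmem_orth]
      constructor
      · intro h w hw
        have := congrFun (congrArg (fun g => g.toFun) h) ⟨w, hw⟩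
        simpa [hΦapp] using this
      · intro h
        ext x
        simpa [hΦapp] using h x x.2
    have hrange : LinearMap.range Φ = ⊤ := by
      apply Submodule.eq_top_of_finrank_eq
      have hrn : Module.finrank K (LinearMap.range Φ) + Module.finrank K (LinearMap.ker Φ)
          = Module.finrank K G := LinearMap.finrank_range_add_finrank_ker Φ
      rw [hker, hdim_orth] at hrn
      have hdual : Module.finrank K (Module.Dual K WS) = Module.finrank K WS :=
        Subspace.dual_finrank_eq
      omega
    set α : Module.Dual K W := η.comp (WS.subtype) with hα
    refine ⟨α, ?_⟩
    intro f
    obtain ⟨u, hu⟩ := (LinearMap.range_eq_top.mp hrange) (-f)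
    obtain ⟨a, w, ha, hw, hsum⟩ := Submodule.codisjoint_iff_exists_add_eq.mp hcompl.codisjoint u
    refine ⟨a, ha, ?_⟩
    intro x
    have h1 : η ⁅u, (x : G)⁆ = -(f x) := by
      have := congrFun (congrArg (fun g => g.toFun) hu) x
      simpa [hΦapp] using this
    have h2 : ⁅a, (x : G)⁆ = ⁅u, (x : G)⁆ - ⁅w, (x : G)⁆ := by
      rw [← hsum, add_lie]; abel
    have h3 : ⁅w, (x : G)⁆ = 0 := habW w hw (x : G) x.2
    show f x = -α ⟨⁅a, (x : G)⁆, W.lie_mem x.2⟩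
    have h4 : α ⟨⁅a, (x : G)⁆, W.lie_mem x.2⟩ = η ⁅a, (x : G)⁆ := rfl
    rw [h4, h2, h3, sub_zero, h1, neg_neg]
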